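/- For every natural number n ≥ 1, (1/n!) · ∑_{k=0}^{n} C(n,k) · (-1)^k · (n - 2k)^n = 2^n. -/

import Mathlib

open Finset

lemma fwdDiff_iter_pow (n j : ℕ) (hj : j ≤ n) :
    (fwdDiff (1 : ℚ))^[n] (fun x : ℚ ↦ x ^ j) =
      fun _ ↦ (if j = n then (n.factorial : ℚ) else 0) := by
  induction n generalizing j with
  | zero =>
    interval_cases j
    simp [Nat.factorial]
  | succ n IH =>
    rw [Function.iterate_succ_apply]
    rcases j with _ | m
    · have h0 : fwdDiff (1 : ℚ) (fun x : ℚ ↦ x ^ 0) = fun _ ↦ (0 : ℚ) := by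
        funext x; simp [fwdDiff]
      rw [h0]
      have : (fun _ : ℚ ↦ (0 : ℚ)) = (0 : ℚ) • (fun x : ℚ ↦ x ^ 0) := by
        funext x; simp
      rw [this, fwdDiff_iter_const_smul, IH 0 (Nat.zero_le n)]
      funext x
      simp [Nat.succ_ne_zero]
    · have hm : m ≤ n := Nat.succ_le_succ_iff.mp hj
      have hΔ : fwdDiff (1 : ℚ) (fun x : ℚ ↦ x ^ (m + 1)) =
          ∑ i ∈ range (m + 1), ((m + 1).choose i : ℚ) • (fun x : ℚ ↦ x ^ i) := by
        funext x
        simp only [fwdDiff, Finset.sum_apply, Pi.smul_apply, smul_eq_mul]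
        rw [add_pow]
        rw [Finset.sum_range_succ]
        simp [mul_comm]
      rw [hΔ, fwdDiff_iter_finset_sum]
      funext x
      simp only [fwdDiff_iter_const_smul, Finset.sum_apply, Pi.smul_apply, smul_eq_mul]
      have : ∀ i ∈ range (m + 1),
          ((m + 1).choose i : ℚ) * ((fwdDiff (1:ℚ))^[n] (fun x : ℚ ↦ x ^ i) x) =
          if i = n then ((m + 1).choose n : ℚ) * n.factorial else 0 := by
        intro i hi
        rw [IH i (le_trans (Nat.lt_succ_iff.mp (mem_range.mp hi)) hm)]
        split_ifs with h
        · subst h; rfl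
        · simp
      rw [Finset.sum_congr rfl this, Finset.sum_ite_eq' (range (m+1)) n]
      rcases eq_or_lt_of_le hm with h | h
      · subst h
        simp [Nat.choose_succ_self_right, Nat.factorial_succ]
      · rw [if_neg (by simp [Nat.lt_irrefl]; omega), if_neg (by omega)]

/-- `(1/n!) ∑_{k=0}^n C(n,k) (-1)^k (n-2k)^n = 2^n` for `n ≥ 1`. -/
theorem polarization_constant (n : ℕ) (hn : 1 ≤ n) :
    (1 / (n.factorial : ℚ)) *
      ∑ k ∈ Finset.range (n + 1),
        (n.choose k : ℚ) * (-1 : ℚ) ^ k * ((n : ℚ) - 2 * k) ^ n = 2 ^ n := by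
  have key := fwdDiff_iter_eq_sum_shift (M := ℚ) (G := ℚ) (h := 1)
    (fun x : ℚ ↦ x ^ n) n (-(n : ℚ) / 2)
  rw [fwdDiff_iter_pow n n le_rfl, if_pos rfl] at key
  simp only at key
  have hsum : ∑ k ∈ Finset.range (n + 1),
      (n.choose k : ℚ) * (-1 : ℚ) ^ k * ((n : ℚ) - 2 * k) ^ n
      = 2 ^ n * (n.factorial : ℚ) := by
    rw [key, Finset.mul_sum]
    apply Finset.sum_congr rfl
    intro k hk
    have hk' : k ≤ n := Nat.lt_succ_iff.mp (mem_range.mp hk)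
    have hsign2 : (-1:ℚ)^(n-k) = (-1)^n * (-1)^k := by
      rw [← pow_add, show n + k = (n - k) + 2*k by omega, pow_add, pow_mul, neg_one_sq,
        one_pow, mul_one]
    have h1 : ((n : ℚ) - 2 * k) = (-2) * (-(n : ℚ) / 2 + k • (1:ℚ)) := by
      push_cast; ring
    rw [h1, mul_pow, zsmul_eq_mul]
    push_cast [hsign2]
    rw [show (-2:ℚ)^n = (-1)^n * 2^n by rw [neg_pow]]
    ring
  rw [hsum]
  field_simp
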